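/- Let K be a discretely valued field with valuation ring R and residue field k (not assumed perfect) of characteristic not equal to 2 or 3, and let E be an elliptic curve over K. Then the finite étale K-group scheme E[3] of 3-torsion points is tamely ramified with respect to R; that is, every residue field of the K-scheme E[3] is a finite separable extension of K which is tamely ramified (its ramification index is prime to char k and its residue extension is separable). -/

import Mathlib

open AlgebraicGeometry CategoryTheory CategoryTheory.Limits

universe u

noncomputable section

/-- A finite extension `L` of the fraction field `K` of a discrete valuation ring `R` is
tamely ramified if it is separable, the ramification index over `R` of every maximal ideal
of the integral closure of `R` in `L` is prime to the residue characteristic of `R`, and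
the residue field extensions are separable. -/
def IsTamelyRamifiedExtension (R : Type u) [CommRing R] [IsDomain R]
    [IsDiscreteValuationRing R] (K L : Type u) [Field K] [Field L] [Algebra R K]
    [IsFractionRing R K] [Algebra K L] [Algebra R L] [IsScalarTower R K L] : Prop :=
  FiniteDimensional K L ∧ Algebra.IsSeparable K L ∧
    ∀ Q : Ideal (integralClosure R L), Q.IsMaximal →
      (ringChar (IsLocalRing.ResidueField R) ≠ 0 →
        ¬ (ringChar (IsLocalRing.ResidueField R) ∣
          Ideal.ramificationIdx'
            (IsLocalRing.maximalIdeal R) Q)) ∧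
      ∃ h : IsLocalRing.maximalIdeal R ≤ Q.comap (algebraMap R (integralClosure R L)),
        letI : Algebra (R ⧸ IsLocalRing.maximalIdeal R) (integralClosure R L ⧸ Q) :=
          Ideal.Quotient.algebraQuotientOfLEComap h
        Algebra.IsSeparable (R ⧸ IsLocalRing.maximalIdeal R) (integralClosure R L ⧸ Q)


open Polynomial Module IntermediateField


lemma sepElt {k E : Type*} [Field k] [Field E] [Algebra k E] {α : E} (hint : IsIntegral k α)
    (h : ringChar k = 0 ∨ (minpoly k α).natDegree < ringChar k) : IsSeparable k α := by
  have hirr := minpoly.irreducible hint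
  rcases h with h0 | hlt
  · haveI : CharP k 0 := h0 ▸ ringChar.charP k
    haveI := CharP.charP_to_charZero k
    exact hirr.separable
  · by_contra hsep
    have hsep' : ¬ (minpoly k α).Separable := hsep
    have hder : derivative (minpoly k α) = 0 := by
      rwa [Polynomial.separable_iff_derivative_ne_zero hirr, not_not] at hsep'
    haveI : CharP k (ringChar k) := ringChar.charP k
    have hp0 : ringChar k ≠ 0 := by omega
    have hec := Polynomial.expand_contract (ringChar k) hder hp0
    have hdeg : (minpoly k α).natDegree
        = (Polynomial.contract (ringChar k) (minpoly k α)).natDegree * ringChar k := by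
      conv_lhs => rw [← hec]
      rw [Polynomial.natDegree_expand]
    have hpos := minpoly.natDegree_pos hint
    rcases Nat.eq_zero_or_pos (Polynomial.contract (ringChar k) (minpoly k α)).natDegree with
      hc | hc
    · rw [hc, zero_mul] at hdeg
      omega
    · have hle : ringChar k ≤ (minpoly k α).natDegree := by
        rw [hdeg]
        exact Nat.le_mul_of_pos_left _ hc
      omega

lemma sepExt (k E : Type*) [Field k] [Field E] [Algebra k E] [FiniteDimensional k E]
    (h : ringChar k = 0 ∨ finrank k E < ringChar k) : Algebra.IsSeparable k E :=
  ⟨fun α => sepElt (Algebra.IsIntegral.isIntegral α)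
    (h.imp id fun hl => lt_of_le_of_lt (minpoly.natDegree_le α) hl)⟩

open Ideal in
lemma ef_le {R : Type u} [CommRing R] [IsDedekindDomain R] (K : Type u) {S : Type u} (L : Type u)
    [Field K] [Field L] [CommRing S] [IsDomain S] [IsDedekindDomain S] [Algebra R S]
    [Algebra R K] [IsFractionRing R K] [Algebra S L] [IsFractionRing S L] [Algebra K L]
    [Algebra R L] [IsScalarTower R S L] [IsScalarTower R K L] [Module.Finite R S]
    (p : Ideal R) [p.IsMaximal] (hp0 : p ≠ ⊥) (Q : Ideal S) (hQp : Q.IsPrime)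
    (hQ : map (algebraMap R S) p ≤ Q) :
    ramificationIdx' p Q * inertiaDeg' p Q ≤ finrank K L := by
  classical
  rw [← Ideal.sum_ramification_inertia S K L hp0]
  have hinj : Function.Injective (algebraMap R S) := by
    have h := IsScalarTower.algebraMap_eq R S L
    have : Function.Injective (algebraMap R L) :=
      (IsScalarTower.algebraMap_eq R K L ▸
        (algebraMap K L).injective.comp (IsFractionRing.injective R K) : _)
    rw [h] at this
    exact Function.Injective.of_comp this
  have hmap0 : map (algebraMap R S) p ≠ ⊥ := by
    exact fun hb => hp0 ((Ideal.map_eq_bot_iff_of_injective hinj).mp hb)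

  have hmem : Q ∈ (UniqueFactorizationMonoid.factors (map (algebraMap R S) p)).toFinset := by
    rw [Multiset.mem_toFinset, UniqueFactorizationMonoid.factors_eq_normalizedFactors,
      Ideal.mem_normalizedFactors_iff hmap0]
    exact ⟨hQp, hQ⟩
  exact Finset.single_le_sum
    (f := fun P => ramificationIdx' p P * inertiaDeg' p P)
    (fun i _ => Nat.zero_le _) hmem

set_option maxHeartbeats 1600000 in
set_option synthInstance.maxHeartbeats 400000 in
open Ideal IsLocalRing in
lemma tame_of_small_tower (R : Type u) [CommRing R] [IsDomain R] [IsDiscreteValuationRing R]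
    (K L₀ L : Type u) [Field K] [Field L₀] [Field L]
    [Algebra R K] [IsFractionRing R K]
    [Algebra K L₀] [Algebra K L] [Algebra L₀ L] [IsScalarTower K L₀ L]
    [Algebra R L₀] [Algebra R L] [IsScalarTower R K L₀] [IsScalarTower R K L]
    [IsScalarTower R L₀ L]
    [FiniteDimensional K L₀] [FiniteDimensional L₀ L]
    [Algebra.IsSeparable K L₀] [Algebra.IsSeparable L₀ L]
    (h₀ : finrank K L₀ ≤ 4) (h₁ : finrank L₀ L ≤ 2)
    (hchar2 : ringChar (IsLocalRing.ResidueField R) ≠ 2)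
    (hchar3 : ringChar (IsLocalRing.ResidueField R) ≠ 3) :
    IsTamelyRamifiedExtension R K L := by
  haveI : FiniteDimensional K L := FiniteDimensional.trans K L₀ L
  haveI : Algebra.IsSeparable K L := Algebra.IsSeparable.trans K L₀ L
  set O₀ := integralClosure R L₀ with hO₀
  set O := integralClosure R L with hO
  -- basic instances
  haveI : IsFractionRing O₀ L₀ := integralClosure.isFractionRing_of_finite_extension K L₀
  haveI : IsFractionRing O L := integralClosure.isFractionRing_of_finite_extension K L
  haveI : IsDedekindDomain O₀ := integralClosure.isDedekindDomain R K L₀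
  haveI : IsDedekindDomain O := integralClosure.isDedekindDomain R K L
  haveI : Module.Finite R O₀ := IsIntegralClosure.finite R K L₀ O₀
  haveI : Module.Finite R O := IsIntegralClosure.finite R K L O
  -- the map O₀ →+* O
  have hmemIC : ∀ z : O₀, algebraMap L₀ L (z : L₀) ∈ integralClosure R L := fun z =>
    IsIntegral.map (IsScalarTower.toAlgHom R L₀ L) z.2
  letI g : O₀ →+* O :=
    ((algebraMap L₀ L).comp (algebraMap O₀ L₀)).codRestrict (integralClosure R L).toSubring hmemIC
  haveI ginj : Function.Injective g := fun a b hab => Subtype.ext <|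
    (algebraMap L₀ L).injective (congrArg Subtype.val hab)
  letI : Algebra O₀ O := g.toAlgebra
  haveI : IsScalarTower O₀ O L := IsScalarTower.of_algebraMap_eq fun _ => rfl
  haveI : IsScalarTower R O₀ O := IsScalarTower.of_algebraMap_eq fun r =>
    Subtype.ext (IsScalarTower.algebraMap_apply R L₀ L r)
  haveI : Module.Finite O₀ O := Module.Finite.of_restrictScalars_finite R O₀ O
  refine ⟨inferInstance, inferInstance, fun Q hQmax => ?_⟩
  haveI := hQmax
  set p := IsLocalRing.maximalIdeal R with hp
  have hp0 : p ≠ ⊥ := IsDiscreteValuationRing.not_a_field R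
  -- comap facts
  have hQc : Ideal.comap (algebraMap R O) Q = p :=
    IsLocalRing.eq_maximalIdeal (Ideal.isMaximal_comap_of_isIntegral_of_isMaximal Q)
  have hle : Ideal.map (algebraMap R O) p ≤ Q := Ideal.map_le_iff_le_comap.mpr hQc.ge
  set Q₀ : Ideal O₀ := Ideal.comap (algebraMap O₀ O) Q with hQ₀
  haveI : Algebra.IsIntegral O₀ O := Algebra.IsIntegral.tower_top (R := R)
  haveI hQ₀max : Q₀.IsMaximal := Ideal.isMaximal_comap_of_isIntegral_of_isMaximal Q
  have hQ₀c : Ideal.comap (algebraMap R O₀) Q₀ = p := by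
    rw [hQ₀, Ideal.comap_comap, ← IsScalarTower.algebraMap_eq R O₀ O]
    exact hQc
  have hle₀ : Ideal.map (algebraMap R O₀) p ≤ Q₀ := Ideal.map_le_iff_le_comap.mpr hQ₀c.ge
  have hle₁ : Ideal.map (algebraMap O₀ O) Q₀ ≤ Q := Ideal.map_comap_le
  have hRL₀ : Function.Injective (algebraMap R L₀) := by
    rw [IsScalarTower.algebraMap_eq R K L₀]
    exact (algebraMap K L₀).injective.comp (IsFractionRing.injective R K)
  have hinj₀ : Function.Injective (algebraMap R O₀) := fun a b hab => hRL₀ (by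
    rw [IsScalarTower.algebraMap_apply R O₀ L₀, hab, ← IsScalarTower.algebraMap_apply])
  have hQ₀0 : Q₀ ≠ ⊥ := by
    intro hb
    apply hp0
    rw [← hQ₀c, hb]
    rw [← RingHom.ker_eq_comap_bot, ← RingHom.injective_iff_ker_eq_bot]
    exact hinj₀
  have hmap0₀ : Ideal.map (algebraMap R O₀) p ≠ ⊥ := fun hb =>
    hp0 ((Ideal.map_eq_bot_iff_of_injective hinj₀).mp hb)
  have hmapg0 : Ideal.map (algebraMap O₀ O) Q₀ ≠ ⊥ := fun hb =>
    hQ₀0 ((Ideal.map_eq_bot_iff_of_injective ginj).mp hb)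
  have hmap0 : Ideal.map (algebraMap R O) p ≠ ⊥ := fun hb => hp0 (by
    apply (Ideal.map_eq_bot_iff_of_injective
      (show Function.Injective (algebraMap R O) from fun a b hab => by
        apply hinj₀; apply ginj
        rw [IsScalarTower.algebraMap_apply R O₀ O a, IsScalarTower.algebraMap_apply R O₀ O b] at hab
        exact hab)).mp hb)
  -- ramification indices and inertia degrees
  haveI : Q₀.LiesOver p := ⟨hQ₀c.symm⟩
  haveI : Q.LiesOver Q₀ := ⟨rfl⟩
  have hef₁ : ramificationIdx' p Q₀ * inertiaDeg' p Q₀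
      ≤ finrank K L₀ := ef_le K L₀ p hp0 Q₀ hQ₀max.isPrime hle₀
  have hef₂ : ramificationIdx' Q₀ Q * inertiaDeg' Q₀ Q
      ≤ finrank L₀ L := ef_le L₀ L Q₀ hQ₀0 Q hQmax.isPrime hle₁
  have he : ramificationIdx' p Q =
      ramificationIdx' p Q₀ * ramificationIdx' Q₀ Q :=
    Ideal.ramificationIdx_algebra_tower hmapg0 hmap0 hle₁
  have he₁0 : ramificationIdx' p Q₀ ≠ 0 :=
    IsDedekindDomain.ramificationIdx_ne_zero hmap0₀ hQ₀max.isPrime hle₀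
  have he₂0 : ramificationIdx' Q₀ Q ≠ 0 :=
    IsDedekindDomain.ramificationIdx_ne_zero hmapg0 hQmax.isPrime hle₁
  have hf₁pos : 0 < inertiaDeg' p Q₀ := Ideal.inertiaDeg'_pos p Q₀
  have hf₂pos : 0 < inertiaDeg' Q₀ Q := Ideal.inertiaDeg'_pos Q₀ Q
  have he₁4 : ramificationIdx' p Q₀ ≤ 4 :=
    le_trans (Nat.le_mul_of_pos_right _ hf₁pos) (hef₁.trans h₀)
  have he₂2 : ramificationIdx' Q₀ Q ≤ 2 :=
    le_trans (Nat.le_mul_of_pos_right _ hf₂pos) (hef₂.trans h₁)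
  have hf₁4 : inertiaDeg' p Q₀ ≤ 4 :=
    le_trans (Nat.le_mul_of_pos_left _ (Nat.pos_of_ne_zero he₁0)) (hef₁.trans h₀)
  have hf₂2 : inertiaDeg' Q₀ Q ≤ 2 :=
    le_trans (Nat.le_mul_of_pos_left _ (Nat.pos_of_ne_zero he₂0)) (hef₂.trans h₁)
  -- the characteristic
  set c := ringChar (IsLocalRing.ResidueField R) with hc
  have hcge : c ≠ 0 → 5 ≤ c ∧ c.Prime := by
    intro hc0
    have hprime : c.Prime :=
      (CharP.char_is_prime_or_zero (IsLocalRing.ResidueField R) c).resolve_right hc0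
    have h4 : c ≠ 4 := fun h => by rw [h] at hprime; norm_num at hprime
    have := hprime.two_le
    exact ⟨by omega, hprime⟩
  constructor
  · intro hc0 hdvd
    obtain ⟨hc5, hcp⟩ := hcge hc0
    rw [he] at hdvd
    rcases (Nat.Prime.dvd_mul hcp).mp hdvd with hd | hd
    · exact absurd (Nat.le_of_dvd (Nat.pos_of_ne_zero he₁0) hd) (by omega)
    · exact absurd (Nat.le_of_dvd (Nat.pos_of_ne_zero he₂0) hd) (by omega)
  -- separability of residue extension
  · refine ⟨hQc.ge, ?_⟩
    letI : Field (R ⧸ p) := Ideal.Quotient.field p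
    letI : Field (O₀ ⧸ Q₀) := Ideal.Quotient.field Q₀
    letI : Field (O ⧸ Q) := Ideal.Quotient.field Q
    letI : Algebra (R ⧸ p) (O₀ ⧸ Q₀) := Ideal.Quotient.algebraQuotientOfLEComap hQ₀c.ge
    letI : Algebra (O₀ ⧸ Q₀) (O ⧸ Q) := Ideal.Quotient.algebraQuotientOfLEComap le_rfl
    letI : Algebra (R ⧸ p) (O ⧸ Q) := Ideal.Quotient.algebraQuotientOfLEComap hQc.ge
    haveI : IsScalarTower (R ⧸ p) (O₀ ⧸ Q₀) (O ⧸ Q) := IsScalarTower.of_algebraMap_eq (by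
      rintro ⟨r⟩
      exact congrArg (Ideal.Quotient.mk Q) (IsScalarTower.algebraMap_apply R O₀ O r))
    have hrc : ringChar (R ⧸ p) = c := rfl
    have hf₁ : finrank (R ⧸ p) (O₀ ⧸ Q₀) = inertiaDeg' p Q₀ :=
      (Ideal.inertiaDeg_algebraMap p Q₀).symm
    have hf₂ : finrank (O₀ ⧸ Q₀) (O ⧸ Q) = inertiaDeg' Q₀ Q :=
      (Ideal.inertiaDeg_algebraMap Q₀ Q).symm
    haveI : FiniteDimensional (R ⧸ p) (O₀ ⧸ Q₀) := .of_finrank_pos (hf₁ ▸ hf₁pos)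
    haveI : FiniteDimensional (O₀ ⧸ Q₀) (O ⧸ Q) := .of_finrank_pos (hf₂ ▸ hf₂pos)
    have hrc₀ : ringChar (O₀ ⧸ Q₀) = c := by
      haveI : CharP (R ⧸ p) c := hrc ▸ ringChar.charP (R ⧸ p)
      haveI : CharP (O₀ ⧸ Q₀) c :=
        charP_of_injective_algebraMap (algebraMap (R ⧸ p) (O₀ ⧸ Q₀)).injective c
      exact ringChar.eq (O₀ ⧸ Q₀) c
    haveI hsep₁ : Algebra.IsSeparable (R ⧸ p) (O₀ ⧸ Q₀) := by
      apply sepExt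
      rcases Nat.eq_zero_or_pos c with h0 | hpos
      · exact Or.inl (hrc.trans h0)
      · refine Or.inr ?_
        obtain ⟨hc5, -⟩ := hcge (by omega)
        rw [hrc, hf₁]
        omega
    haveI hsep₂ : Algebra.IsSeparable (O₀ ⧸ Q₀) (O ⧸ Q) := by
      apply sepExt
      rcases Nat.eq_zero_or_pos c with h0 | hpos
      · exact Or.inl (hrc₀.trans h0)
      · refine Or.inr ?_
        obtain ⟨hc5, -⟩ := hcge (by omega)
        rw [hrc₀, hf₂]
        omega
    exact Algebra.IsSeparable.trans (R ⧸ p) (O₀ ⧸ Q₀) (O ⧸ Q)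

open Classical in
open WeierstrassCurve.Affine WeierstrassCurve.Affine.Point in

lemma psi3_vanish {F : Type*} [Field F] {W : WeierstrassCurve.Affine F} {x y : F}
    (h : W.Nonsingular x y) (htors : 3 • (some x y h) = 0) :
    3 * x ^ 4 + W.b₂ * x ^ 3 + 3 * W.b₄ * x ^ 2 + 3 * W.b₆ * x + W.b₈ = 0 := by
  have h3 : some x y h + some x y h + some x y h = 0 := by
    rw [show (3 : ℕ) = 2 + 1 by rfl, add_smul, two_smul, one_smul] at htors
    exact htors
  have h2 : some x y h + some x y h = -some x y h := eq_neg_of_add_eq_zero_left h3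
  have hy : y ≠ W.negY x y := by
    intro hy
    apply some_ne_zero h
    rw [← neg_eq_zero, ← h2, add_self_of_Y_eq hy]
  rw [add_self_of_Y_ne' hy, neg_some] at h2
  have hxeq : W.addX x x (W.slope x x y y) = x := by
    injection h2 with hx _
  have hy' : y - W.negY x y = 2 * y + W.a₁ * x + W.a₃ := by rw [negY]; ring
  have hd : 2 * y + W.a₁ * x + W.a₃ ≠ 0 := by
    rw [← hy']
    exact sub_ne_zero.mpr hy
  have heq : y ^ 2 + W.a₁ * x * y + W.a₃ * y
      = x ^ 3 + W.a₂ * x ^ 2 + W.a₄ * x + W.a₆ := (W.equation_iff x y).mp h.1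
  rw [addX, slope_of_Y_ne rfl hy, hy'] at hxeq
  have hE : (3 * x ^ 2 + 2 * W.a₂ * x + W.a₄ - W.a₁ * y) ^ 2
      + W.a₁ * (3 * x ^ 2 + 2 * W.a₂ * x + W.a₄ - W.a₁ * y) * (2 * y + W.a₁ * x + W.a₃)
      - (W.a₂ + 3 * x) * (2 * y + W.a₁ * x + W.a₃) ^ 2 = 0 := by
    have hl : (3 * x ^ 2 + 2 * W.a₂ * x + W.a₄ - W.a₁ * y) / (2 * y + W.a₁ * x + W.a₃)
        * (2 * y + W.a₁ * x + W.a₃) = 3 * x ^ 2 + 2 * W.a₂ * x + W.a₄ - W.a₁ * y :=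
      div_mul_cancel₀ _ hd
    have hED : ((3 * x ^ 2 + 2 * W.a₂ * x + W.a₄ - W.a₁ * y) ^ 2
        + W.a₁ * (3 * x ^ 2 + 2 * W.a₂ * x + W.a₄ - W.a₁ * y) * (2 * y + W.a₁ * x + W.a₃)
        - (W.a₂ + 3 * x) * (2 * y + W.a₁ * x + W.a₃) ^ 2) * (2 * y + W.a₁ * x + W.a₃) = 0 := by
      linear_combination (2 * y + W.a₁ * x + W.a₃) ^ 3 * hxeq
        - (2 * y + W.a₁ * x + W.a₃) * ((3 * x ^ 2 + 2 * W.a₂ * x + W.a₄ - W.a₁ * y)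
          + (3 * x ^ 2 + 2 * W.a₂ * x + W.a₄ - W.a₁ * y) / (2 * y + W.a₁ * x + W.a₃)
            * (2 * y + W.a₁ * x + W.a₃) + W.a₁ * (2 * y + W.a₁ * x + W.a₃)) * hl
    exact (mul_eq_zero.mp hED).resolve_right hd
  simp only [WeierstrassCurve.b₂, WeierstrassCurve.b₄, WeierstrassCurve.b₆, WeierstrassCurve.b₈]
  linear_combination (-1 : F) * hE + (-(W.a₁ ^ 2) - 4 * W.a₂ - 12 * x) * heq

set_option maxHeartbeats 1600000 in
set_option synthInstance.maxHeartbeats 400000 in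
open Classical in
open WeierstrassCurve.Affine WeierstrassCurve.Affine.Point in
lemma main_aux (R : Type u) [CommRing R] [IsDomain R] [IsDiscreteValuationRing R]
    (K F : Type u) [Field K] [Field F] [Algebra R K] [IsFractionRing R K] [Algebra K F]
    (hchar2 : ringChar (IsLocalRing.ResidueField R) ≠ 2)
    (hchar3 : ringChar (IsLocalRing.ResidueField R) ≠ 3)
    (Ec : WeierstrassCurve K) (x y : F)
    (h : (Ec.baseChange F).toAffine.Nonsingular x y)
    (htors : 3 • (WeierstrassCurve.Affine.Point.some x y h) = 0) :
    ∀ (M : IntermediateField K F), M = IntermediateField.adjoin K {x, y} →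
      ∀ (_iA : Algebra R (↥M)) (_iT : IsScalarTower R K (↥M)),
        IsTamelyRamifiedExtension R K (↥M) := by
  let W := (Ec.baseChange F).toAffine
  set φ := algebraMap K F with hφ
  -- characteristic facts
  haveI : CharP K (ringChar K) := ringChar.charP K
  have hK5 : ringChar K = 0 ∨ 5 ≤ ringChar K := by
    rcases CharP.char_is_prime_or_zero K (ringChar K) with hp | h0
    · right
      haveI : CharP R (ringChar K) := ⟨fun n => by
        rw [← CharP.cast_eq_zero_iff K (ringChar K) n, ← map_natCast (algebraMap R K) n,
          map_eq_zero_iff _ (IsFractionRing.injective R K)]⟩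
      have hcast : ((ringChar K : ℕ) : IsLocalRing.ResidueField R) = 0 := by
        have h1 : ((ringChar K : ℕ) : R) = 0 := CharP.cast_eq_zero R _
        calc ((ringChar K : ℕ) : IsLocalRing.ResidueField R)
            = IsLocalRing.residue R ((ringChar K : ℕ) : R) := (map_natCast _ _).symm
          _ = 0 := by rw [h1, _root_.map_zero]
      have hdvd : ringChar (IsLocalRing.ResidueField R) ∣ ringChar K := ringChar.dvd hcast
      rcases (Nat.dvd_prime hp).mp hdvd with h1 | he
      · exact absurd h1 CharP.ringChar_ne_one
      · have h2 : ringChar K ≠ 2 := he ▸ hchar2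
        have h3 : ringChar K ≠ 3 := he ▸ hchar3
        have h4 : ringChar K ≠ 4 := fun hc => by rw [hc] at hp; norm_num at hp
        have := hp.two_le
        omega
    · exact Or.inl h0
  have h3K : (3 : K) ≠ 0 := by
    intro hc
    have hcast : ((3 : ℕ) : K) = 0 := by exact_mod_cast hc
    have hdvd := ringChar.dvd hcast
    rcases hK5 with h0 | h5
    · rw [h0] at hdvd
      simpa using (Nat.eq_zero_of_zero_dvd hdvd)
    · exact absurd (Nat.le_of_dvd (by norm_num) hdvd) (by omega)
  -- the quartic satisfied by x
  have hψp := psi3_vanish h htors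
  have hψ : 3 * x ^ 4 + φ Ec.b₂ * x ^ 3 + 3 * φ Ec.b₄ * x ^ 2 + 3 * φ Ec.b₆ * x + φ Ec.b₈
      = 0 := by
    rw [show φ Ec.b₂ = W.b₂ from (WeierstrassCurve.map_b₂ ..).symm,
      show φ Ec.b₄ = W.b₄ from (WeierstrassCurve.map_b₄ ..).symm,
      show φ Ec.b₆ = W.b₆ from (WeierstrassCurve.map_b₆ ..).symm,
      show φ Ec.b₈ = W.b₈ from (WeierstrassCurve.map_b₈ ..).symm]
    exact hψp
  set q : K[X] := C 3 * X ^ 4 + C Ec.b₂ * X ^ 3 + C (3 * Ec.b₄) * X ^ 2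
    + C (3 * Ec.b₆) * X + C Ec.b₈ with hq
  have haeval : Polynomial.aeval x q = 0 := by
    rw [hq]
    simp only [map_add, map_mul, map_pow, map_ofNat, aeval_X, aeval_C]
    linear_combination hψ
  have hqdeg : q.natDegree = 4 := by
    rw [hq]
    compute_degree
    all_goals first | exact h3K | norm_num
  have hq0 : q ≠ 0 := fun hc => by simp [hc] at hqdeg
  have hxint : IsIntegral K x := (IsAlgebraic.isIntegral ⟨q, hq0, haeval⟩)
  have hmin4 : (minpoly K x).natDegree ≤ 4 := by
    have := Polynomial.natDegree_le_natDegree (minpoly.degree_le_of_ne_zero K x hq0 haeval)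
    omega
  have hxsep : IsSeparable K x := sepElt hxint (hK5.imp id fun h5 => by omega)
  -- the intermediate field L₀ = K(x)
  set L₀ : IntermediateField K F := IntermediateField.adjoin K {x} with hL₀
  haveI : FiniteDimensional K (↥L₀) := IntermediateField.adjoin.finiteDimensional hxint
  have h₀ : finrank K (↥L₀) ≤ 4 := by
    rw [hL₀, IntermediateField.adjoin.finrank hxint]
    exact hmin4
  haveI hsepKL₀ : Algebra.IsSeparable K (↥L₀) :=
    (IntermediateField.isSeparable_adjoin_simple_iff_isSeparable K F).mpr hxsep
  -- the quadratic satisfied by y over L₀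
  set xg : (↥L₀) := IntermediateField.AdjoinSimple.gen K x with hxg
  set ψ := algebraMap K (↥L₀) with hψK
  set r : (↥L₀)[X] := X ^ 2 + C (ψ Ec.a₁ * xg + ψ Ec.a₃) * X
    - C (xg ^ 3 + ψ Ec.a₂ * xg ^ 2 + ψ Ec.a₄ * xg + ψ Ec.a₆) with hr
  have hxcoe : algebraMap (↥L₀) F xg = x := IntermediateField.AdjoinSimple.algebraMap_gen K x
  have hcoe : ∀ a : K, algebraMap (↥L₀) F (ψ a) = φ a := fun a =>
    (IsScalarTower.algebraMap_apply K (↥L₀) F a).symm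
  have heqF : y ^ 2 + φ Ec.a₁ * x * y + φ Ec.a₃ * y
      = x ^ 3 + φ Ec.a₂ * x ^ 2 + φ Ec.a₄ * x + φ Ec.a₆ := (W.equation_iff x y).mp h.1
  have hraeval : Polynomial.aeval y r = 0 := by
    rw [hr]
    simp only [map_add, map_sub, map_mul, map_pow, aeval_X, aeval_C]
    rw [hxcoe, hcoe, hcoe, hcoe, hcoe, hcoe]
    linear_combination heqF
  have hrdeg : r.natDegree = 2 := by
    rw [hr]
    compute_degree!
  have hr0 : r ≠ 0 := fun hc => by simp [hc] at hrdeg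
  have hyint : IsIntegral (↥L₀) y := (IsAlgebraic.isIntegral ⟨r, hr0, hraeval⟩)
  have hmin2 : (minpoly (↥L₀) y).natDegree ≤ 2 := by
    have := Polynomial.natDegree_le_natDegree (minpoly.degree_le_of_ne_zero (↥L₀) y hr0 hraeval)
    omega
  have hrcL₀ : ringChar (↥L₀) = ringChar K := by
    haveI : CharP (↥L₀) (ringChar K) :=
      charP_of_injective_algebraMap (algebraMap K (↥L₀)).injective _
    exact ringChar.eq (↥L₀) (ringChar K)
  have hysep : IsSeparable (↥L₀) y := sepElt hyint (by
    rcases hK5 with h0 | h5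
    · exact Or.inl (hrcL₀.trans h0)
    · exact Or.inr (by rw [hrcL₀]; omega))
  -- the top field as L₀-extension
  set T : IntermediateField (↥L₀) F := IntermediateField.adjoin (↥L₀) {y} with hT
  haveI : FiniteDimensional (↥L₀) (↥T) := IntermediateField.adjoin.finiteDimensional hyint
  have h₁ : finrank (↥L₀) (↥T) ≤ 2 := by
    rw [hT, IntermediateField.adjoin.finrank hyint]
    exact hmin2
  haveI hsepT : Algebra.IsSeparable (↥L₀) (↥T) :=
    (IntermediateField.isSeparable_adjoin_simple_iff_isSeparable (↥L₀) F).mpr hysep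
  have hTeq : IntermediateField.adjoin K ({x, y} : Set F) = T.restrictScalars K := by
    rw [hT, hL₀, ← Set.singleton_union]
    exact (IntermediateField.adjoin_adjoin_left K {x} {y}).symm
  intro M hM
  rw [hTeq] at hM
  subst hM
  intro iA iT
  letI : Algebra R (↥L₀) := ((algebraMap K (↥L₀)).comp (algebraMap R K)).toAlgebra
  haveI : IsScalarTower R K (↥L₀) := IsScalarTower.of_algebraMap_eq fun _ => rfl
  letI : Algebra (↥L₀) (↥(T.restrictScalars K)) := inferInstanceAs (Algebra (↥L₀) (↥T))
  haveI : IsScalarTower K (↥L₀) (↥(T.restrictScalars K)) :=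
    IsScalarTower.of_algebraMap_eq fun a => Subtype.ext rfl
  haveI : IsScalarTower R (↥L₀) (↥(T.restrictScalars K)) :=
    IsScalarTower.of_algebraMap_eq fun rr => by
      rw [IsScalarTower.algebraMap_apply R K (↥(T.restrictScalars K)),
        IsScalarTower.algebraMap_apply K (↥L₀) (↥(T.restrictScalars K))]
      rfl
  haveI : FiniteDimensional (↥L₀) (↥(T.restrictScalars K)) :=
    inferInstanceAs (FiniteDimensional (↥L₀) (↥T))
  haveI : Algebra.IsSeparable (↥L₀) (↥(T.restrictScalars K)) :=
    inferInstanceAs (Algebra.IsSeparable (↥L₀) (↥T))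
  exact tame_of_small_tower R K (↥L₀) (↥(T.restrictScalars K)) h₀
    (by exact h₁) hchar2 hchar3


open Classical in
/-- **Lemma 5.1.** Let `K` be a discretely valued field with valuation ring `R` whose
residue field (not assumed perfect) has characteristic not equal to `2` or `3`, and let
`E` be an elliptic curve over `K`. Then the `3`-torsion of `E` is tamely ramified with
respect to `R`: for every geometric `3`-torsion point `P ≠ 0`, with coordinates `x`, `y`
in the algebraic closure of `K`, the field `K(x,y)` (the residue field of the
corresponding point of the `K`-scheme `E[3]`) is a finite separable tamely ramified
extension of `K`. -/
theorem three_torsion_tamely_ramified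
    (R : Type u) [CommRing R] [IsDomain R] [IsDiscreteValuationRing R]
    (hchar2 : ringChar (IsLocalRing.ResidueField R) ≠ 2)
    (hchar3 : ringChar (IsLocalRing.ResidueField R) ≠ 3)
    (Ec : WeierstrassCurve (FractionRing R)) (hΔ : IsUnit Ec.Δ)
    (x y : AlgebraicClosure (FractionRing R))
    (h : (Ec.baseChange (AlgebraicClosure (FractionRing R))).toAffine.Nonsingular x y)
    (htors : 3 • (WeierstrassCurve.Affine.Point.some x y h) = 0) :
    letI : Algebra R
        (IntermediateField.adjoin (FractionRing R)
          {x, y} : IntermediateField (FractionRing R) (AlgebraicClosure (FractionRing R))) :=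
      ((algebraMap (FractionRing R) (IntermediateField.adjoin (FractionRing R)
          ({x, y} : Set (AlgebraicClosure (FractionRing R))))).comp
        (algebraMap R (FractionRing R))).toAlgebra
    letI : IsScalarTower R (FractionRing R)
        (IntermediateField.adjoin (FractionRing R)
          ({x, y} : Set (AlgebraicClosure (FractionRing R)))) :=
      IsScalarTower.of_algebraMap_eq fun _ => rfl
    IsTamelyRamifiedExtension R (FractionRing R)
      (IntermediateField.adjoin (FractionRing R)
        ({x, y} : Set (AlgebraicClosure (FractionRing R)))) := by
  exact main_aux R (FractionRing R) (AlgebraicClosure (FractionRing R)) hchar2 hchar3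
    Ec x y h htors _ rfl _ _
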